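/- Let n > 2, k = 2^r + 1 with r ≥ 1 and r + 1 ≤ n, and s_i = k·2^{n+i} + 1. For 1 ≤ i ≤ r and 1 ≤ j ≤ n - 2, the integer (2·s_j + s_{j+1} + ⋯ + s_{n-1} + s_{n+r}) - (2·s_i + s_{i+1} + ⋯ + s_{n+r-1}) = k·2^{2n} + 1 - r - j + i does not belong to P_k(n). -/

import Mathlib

private lemma aux_sum (K a b : ℕ) (h : a ≤ b) :
    ∑ t ∈ Finset.Ico a b, (K * 2 ^ t + 1) = K * 2 ^ b - K * 2 ^ a + (b - a) := by
  induction b, h using Nat.le_induction with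
  | base => simp
  | succ b hb ih =>
    rw [Finset.sum_Ico_succ_top (by omega), ih]
    have h1 : K * 2 ^ a ≤ K * 2 ^ b :=
      Nat.mul_le_mul_left _ (Nat.pow_le_pow_right (by norm_num) hb)
    have h2 : K * 2 ^ (b + 1) = 2 * (K * 2 ^ b) := by ring
    omega

private lemma aux_2n (n : ℕ) (h : 2 ≤ n) : 2 * n ≤ 2 ^ n := by
  induction n, h using Nat.le_induction with
  | base => norm_num
  | succ n hn ih => rw [pow_succ]; omega

private lemma closure_bound (K : ℕ) (hK : 1 < K) {S : Set ℕ}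
    (hS : ∀ x ∈ S, ∃ l, x = K * 2 ^ l + 1) (N : ℕ)
    (hN : N ∈ AddSubmonoid.closure S) :
    N = 0 ∨ ∃ m, 1 ≤ m ∧ m % K = N % K ∧ m * (K + 1) ≤ N := by
  induction hN using AddSubmonoid.closure_induction with
  | mem x hx =>
    obtain ⟨l, rfl⟩ := hS x hx
    right
    refine ⟨1, le_refl _, ?_, ?_⟩
    · rw [add_comm, Nat.add_mul_mod_self_left]
    · have h1 : (1 : ℕ) ≤ 2 ^ l := Nat.one_le_two_pow
      have h2 : K * 1 ≤ K * 2 ^ l := Nat.mul_le_mul_left _ h1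
      omega
  | zero => left; rfl
  | add x y hx hy ihx ihy =>
    rcases ihx with rfl | ⟨m1, h11, h12, h13⟩
    · simpa using ihy
    rcases ihy with rfl | ⟨m2, h21, h22, h23⟩
    · right; exact ⟨m1, h11, by simpa using h12, by simpa using h13⟩
    · right
      refine ⟨m1 + m2, by omega, ?_, ?_⟩
      · rw [Nat.add_mod, h12, h22, ← Nat.add_mod]
      · have := Nat.add_le_add h13 h23
        rw [← add_mul] at this
        exact this

theorem difference_not_mem (n r i j : ℕ) (hn : 2 < n) (hr : 1 ≤ r) (hrn : r + 1 ≤ n)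
    (hi1 : 1 ≤ i) (hi2 : i ≤ r) (hj1 : 1 ≤ j) (hj2 : j ≤ n - 2) :
    (2 * ((2 ^ r + 1) * 2 ^ (n + j) + 1)
        + (∑ t ∈ Finset.Ico (j + 1) n, ((2 ^ r + 1) * 2 ^ (n + t) + 1))
        + ((2 ^ r + 1) * 2 ^ (n + (n + r)) + 1))
      - (2 * ((2 ^ r + 1) * 2 ^ (n + i) + 1)
        + (∑ t ∈ Finset.Ico (i + 1) (n + r), ((2 ^ r + 1) * 2 ^ (n + t) + 1)))
      = (2 ^ r + 1) * 2 ^ (2 * n) + 1 + i - (r + j) ∧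
    (2 ^ r + 1) * 2 ^ (2 * n) + 1 + i - (r + j) ∉
      AddSubmonoid.closure {m : ℕ | ∃ l : ℕ, m = (2 ^ r + 1) * 2 ^ (n + l) + 1} := by
  have hj2' : j + 1 ≤ n := by omega
  have hi2' : i + 1 ≤ n + r := by omega
  have h2n : 2 * n ≤ 2 ^ n := aux_2n n (by omega)
  have h8 : (8 : ℕ) ≤ 2 ^ n := by
    calc (8 : ℕ) = 2 ^ 3 := by norm_num
    _ ≤ 2 ^ n := Nat.pow_le_pow_right (by norm_num) hn
  have h2r : (2 : ℕ) ≤ 2 ^ r := by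
    calc (2 : ℕ) = 2 ^ 1 := by norm_num
    _ ≤ 2 ^ r := Nat.pow_le_pow_right (by norm_num) hr
  constructor
  · have e1 : (∑ t ∈ Finset.Ico (j + 1) n, ((2 ^ r + 1) * 2 ^ (n + t) + 1))
        = (2 ^ r + 1) * 2 ^ n * 2 ^ n - (2 ^ r + 1) * 2 ^ n * 2 ^ (j + 1) + (n - (j + 1)) := by
      calc (∑ t ∈ Finset.Ico (j + 1) n, ((2 ^ r + 1) * 2 ^ (n + t) + 1))
          = ∑ t ∈ Finset.Ico (j + 1) n, ((2 ^ r + 1) * 2 ^ n * 2 ^ t + 1) := by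
            apply Finset.sum_congr rfl
            intro t _
            rw [pow_add, ← mul_assoc]
        _ = _ := aux_sum _ _ _ hj2'
    have e2 : (∑ t ∈ Finset.Ico (i + 1) (n + r), ((2 ^ r + 1) * 2 ^ (n + t) + 1))
        = (2 ^ r + 1) * 2 ^ n * 2 ^ (n + r) - (2 ^ r + 1) * 2 ^ n * 2 ^ (i + 1)
            + (n + r - (i + 1)) := by
      calc (∑ t ∈ Finset.Ico (i + 1) (n + r), ((2 ^ r + 1) * 2 ^ (n + t) + 1))
          = ∑ t ∈ Finset.Ico (i + 1) (n + r), ((2 ^ r + 1) * 2 ^ n * 2 ^ t + 1) := by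
            apply Finset.sum_congr rfl
            intro t _
            rw [pow_add, ← mul_assoc]
        _ = _ := aux_sum _ _ _ hi2'
    have p1 : (2 ^ r + 1) * 2 ^ (n + j) = (2 ^ r + 1) * 2 ^ n * 2 ^ j := by
      rw [pow_add, ← mul_assoc]
    have p2 : (2 ^ r + 1) * 2 ^ (n + (n + r)) = (2 ^ r + 1) * 2 ^ n * 2 ^ n * 2 ^ r := by
      rw [pow_add, pow_add]; ring
    have p3 : (2 ^ r + 1) * 2 ^ (n + i) = (2 ^ r + 1) * 2 ^ n * 2 ^ i := by
      rw [pow_add, ← mul_assoc]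
    have p4 : (2 ^ r + 1) * 2 ^ (2 * n) = (2 ^ r + 1) * 2 ^ n * 2 ^ n := by
      rw [two_mul, pow_add, ← mul_assoc]
    have p7 : (2 ^ r + 1) * 2 ^ n * 2 ^ (n + r) = (2 ^ r + 1) * 2 ^ n * 2 ^ n * 2 ^ r := by
      rw [pow_add, ← mul_assoc]
    rw [e1, e2, p1, p2, p3, p4, p7]
    have p5 : (2 ^ r + 1) * 2 ^ n * 2 ^ (j + 1) = 2 * ((2 ^ r + 1) * 2 ^ n * 2 ^ j) := by ring
    have p6 : (2 ^ r + 1) * 2 ^ n * 2 ^ (i + 1) = 2 * ((2 ^ r + 1) * 2 ^ n * 2 ^ i) := by ring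
    have q1 : (2 ^ r + 1) * 2 ^ n * 2 ^ (j + 1) ≤ (2 ^ r + 1) * 2 ^ n * 2 ^ n :=
      Nat.mul_le_mul_left _ (Nat.pow_le_pow_right (by norm_num) hj2')
    have q2 : (2 ^ r + 1) * 2 ^ n * 2 ^ (i + 1) ≤ (2 ^ r + 1) * 2 ^ n * 2 ^ (n + r) :=
      Nat.mul_le_mul_left _ (Nat.pow_le_pow_right (by norm_num) hi2')
    rw [p7] at q2
    have g6 : n + r + j ≤ (2 ^ r + 1) * 2 ^ n * 2 ^ n := by
      have hX3 : 3 * 2 ^ n ≤ (2 ^ r + 1) * 2 ^ n := Nat.mul_le_mul_right _ (by omega)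
      have hXle : (2 ^ r + 1) * 2 ^ n ≤ (2 ^ r + 1) * 2 ^ n * 2 ^ n :=
        Nat.le_mul_of_pos_right _ (by positivity)
      omega
    have key : ∀ a1 a2 b c d1 d2 : ℕ, a2 = 2 * a1 → d2 = 2 * d1 → a2 ≤ b → d2 ≤ c →
        n + r + j ≤ b →
        (2 * (a1 + 1) + (b - a2 + (n - (j + 1))) + (c + 1))
          - (2 * (d1 + 1) + (c - d2 + (n + r - (i + 1)))) = b + 1 + i - (r + j) := by
      intros a1 a2 b c d1 d2 h1 h2 h3 h4 h5
      omega
    exact key _ _ _ _ _ _ p5 p6 q1 q2 g6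
  · intro hmem
    have hK : 1 < (2 ^ r + 1) * 2 ^ n := by
      have : (1 : ℕ) ≤ 2 ^ r + 1 := by omega
      nlinarith
    have hSgen : ∀ x ∈ {m : ℕ | ∃ l : ℕ, m = (2 ^ r + 1) * 2 ^ (n + l) + 1},
        ∃ l, x = (2 ^ r + 1) * 2 ^ n * 2 ^ l + 1 := by
      rintro x ⟨l, rfl⟩
      exact ⟨l, by rw [pow_add, ← mul_assoc]⟩
    have h := closure_bound ((2 ^ r + 1) * 2 ^ n) hK hSgen _ hmem
    have p4 : (2 ^ r + 1) * 2 ^ (2 * n) = (2 ^ r + 1) * 2 ^ n * 2 ^ n := by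
      rw [two_mul, pow_add, ← mul_assoc]
    rw [p4] at h
    have hK3 : 3 * 2 ^ n ≤ (2 ^ r + 1) * 2 ^ n := Nat.mul_le_mul_right _ (by omega)
    have hXle : (2 ^ r + 1) * 2 ^ n ≤ (2 ^ r + 1) * 2 ^ n * 2 ^ n :=
      Nat.le_mul_of_pos_right _ (by positivity)
    rcases h with h0 | ⟨m, hm1, hm2, hm3⟩
    · omega
    · -- bound m < 2^n
      have hmlt : m < 2 ^ n := by
        by_contra hcon
        push_neg at hcon
        have h1 : 2 ^ n * ((2 ^ r + 1) * 2 ^ n + 1) ≤ m * ((2 ^ r + 1) * 2 ^ n + 1) :=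
          Nat.mul_le_mul_right _ hcon
        have h2 : 2 ^ n * ((2 ^ r + 1) * 2 ^ n + 1)
            = (2 ^ r + 1) * 2 ^ n * 2 ^ n + 2 ^ n := by ring
        omega
      have hmm : m % ((2 ^ r + 1) * 2 ^ n) = m := Nat.mod_eq_of_lt (by omega)
      have hmul : (2 ^ r + 1) * 2 ^ n * (2 ^ n - 1) + (2 ^ r + 1) * 2 ^ n
          = (2 ^ r + 1) * 2 ^ n * 2 ^ n := by
        have h9 : 2 ^ n - 1 + 1 = 2 ^ n := by
          have : (1:ℕ) ≤ 2 ^ n := Nat.one_le_two_pow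
          omega
        rw [← Nat.mul_succ, Nat.succ_eq_add_one, h9]
      have hsplit : (2 ^ r + 1) * 2 ^ n * 2 ^ n + 1 + i - (r + j)
          = (2 ^ r + 1) * 2 ^ n * (2 ^ n - 1)
            + ((2 ^ r + 1) * 2 ^ n - (r + j - i - 1)) := by
        omega
      rw [hsplit, Nat.mul_add_mod, hmm] at hm2
      rcases Nat.eq_zero_or_pos (r + j - i - 1) with he0 | he0
      · rw [he0, Nat.sub_zero, Nat.mod_self] at hm2
        omega
      · rw [Nat.mod_eq_of_lt (by omega)] at hm2
        omega
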